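/- Internal stability of the NRF implementation (Theorem 2(a)): Let (M, N, M̃, Ñ, X, Y, X̃, Ỹ) be a DCF of the p×m matrix G over RatFunc ℝ in which all eight matrices are stable, let Q be an m×p stable matrix with X_Q := X + Q·M̃, Y_Q := Y − Q·Ñ, X̃_Q := X̃ + M·Q, Ỹ_Q := Ỹ − N·Q, assume Y_Q^diag is invertible, and define Φ := I_m − (Y_Q^diag)⁻¹·Y_Q and Γ := (Y_Q^diag)⁻¹·X_Q. Suppose the vectors z, y, r, ν ∈ (RatFunc ℝ)^p and u, v, w, δ_u ∈ (RatFunc ℝ)^m satisfy the feedback equations z = r − y, v = u + w, y = G·v + ν, and u = Φ·(u + δ_u) + Γ·z. Then z = −Ỹ_Q·Ñ·w + Ỹ_Q·M̃·r − Ỹ_Q·M̃·ν + N·(Y_Q − Y_Q^diag)·δ_u and u = −X̃_Q·Ñ·w + X̃_Q·M̃·r − X̃_Q·M̃·ν − M·(Y_Q − Y_Q^diag)·δ_u; moreover, each of the coefficient matrices Ỹ_Q·Ñ, Ỹ_Q·M̃, N·(Y_Q − Y_Q^diag), X̃_Q·Ñ, X̃_Q·M̃, M·(Y_Q − Y_Q^diag),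 I_m − X̃_Q·Ñ, and I_p − Ỹ_Q·M̃ is stable. -/

import Mathlib

open Matrix Polynomial

noncomputable section

/-- A rational function is stable if every complex root of the image in `ℂ[X]`
of its reduced denominator has negative real part. -/
def RFStable (f : RatFunc ℝ) : Prop :=
  ∀ z : ℂ, aeval z f.denom = 0 → z.re < 0

/-- A matrix over `RatFunc ℝ` is stable if all of its entries are stable. -/
def MatStable {a b : Type*} (G : Matrix a b (RatFunc ℝ)) : Prop :=
  ∀ i j, RFStable (G i j)

lemma RFStable.of_denom_dvd {f g : RatFunc ℝ} (h : RFStable g) (hd : f.denom ∣ g.denom) :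
    RFStable f := by
  intro z hz
  obtain ⟨c, hc⟩ := hd
  exact h z (by rw [hc, _root_.map_mul, hz, zero_mul])

lemma RFStable.of_denom_dvd_mul {f g h : RatFunc ℝ} (hg : RFStable g) (hh : RFStable h)
    (hd : f.denom ∣ g.denom * h.denom) : RFStable f := by
  intro z hz
  obtain ⟨c, hc⟩ := hd
  have : aeval z (g.denom * h.denom) = 0 := by rw [hc, _root_.map_mul, hz, zero_mul]
  rw [_root_.map_mul, mul_eq_zero] at this
  rcases this with h' | h'
  · exact hg z h'
  · exact hh z h'

lemma RFStable.add {f g : RatFunc ℝ} (hf : RFStable f) (hg : RFStable g) : RFStable (f + g) :=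
  RFStable.of_denom_dvd_mul hf hg (RatFunc.denom_add_dvd f g)

lemma RFStable.mul {f g : RatFunc ℝ} (hf : RFStable f) (hg : RFStable g) : RFStable (f * g) :=
  RFStable.of_denom_dvd_mul hf hg (RatFunc.denom_mul_dvd f g)

lemma RFStable.zero : RFStable (0 : RatFunc ℝ) := by
  intro z hz
  simp [RatFunc.denom_zero] at hz

lemma RFStable.one : RFStable (1 : RatFunc ℝ) := by
  intro z hz
  simp [RatFunc.denom_one] at hz

lemma RFStable.neg {f : RatFunc ℝ} (hf : RFStable f) : RFStable (-f) := by
  refine RFStable.of_denom_dvd hf ?_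
  have : -f = algebraMap (Polynomial ℝ) (RatFunc ℝ) (-f.num) /
      algebraMap (Polynomial ℝ) (RatFunc ℝ) f.denom := by
    rw [map_neg, neg_div, RatFunc.num_div_denom]
  rw [this]
  exact RatFunc.denom_div_dvd _ _

lemma RFStable.sub {f g : RatFunc ℝ} (hf : RFStable f) (hg : RFStable g) : RFStable (f - g) := by
  rw [sub_eq_add_neg]; exact hf.add hg.neg

lemma RFStable.sum {s : Finset α} {f : α → RatFunc ℝ} (h : ∀ i ∈ s, RFStable (f i)) :
    RFStable (∑ i ∈ s, f i) := by
  classical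
  induction s using Finset.induction_on with
  | empty => simpa using RFStable.zero
  | insert _ _ hx ih =>
    rw [Finset.sum_insert hx]
    exact (h _ (by simp)).add (ih fun i hi => h i (by simp [hi]))

lemma MatStable.add {a b : Type*} {A B : Matrix a b (RatFunc ℝ)} (hA : MatStable A)
    (hB : MatStable B) : MatStable (A + B) := fun i j => (hA i j).add (hB i j)

lemma MatStable.sub {a b : Type*} {A B : Matrix a b (RatFunc ℝ)} (hA : MatStable A)
    (hB : MatStable B) : MatStable (A - B) := fun i j => (hA i j).sub (hB i j)

lemma MatStable.mul {a b c : Type*} [Fintype b] {A : Matrix a b (RatFunc ℝ)}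
    {B : Matrix b c (RatFunc ℝ)} (hA : MatStable A) (hB : MatStable B) : MatStable (A * B) := by
  intro i j
  rw [Matrix.mul_apply]
  exact RFStable.sum fun k _ => (hA i k).mul (hB k j)

lemma MatStable.one {a : Type*} [DecidableEq a] : MatStable (1 : Matrix a a (RatFunc ℝ)) := by
  intro i j
  by_cases h : i = j
  · subst h; simpa using RFStable.one
  · simp [Matrix.one_apply_ne h]; exact RFStable.zero

lemma MatStable.diagonal {a : Type*} [DecidableEq a] {A : Matrix a a (RatFunc ℝ)}
    (hA : MatStable A) : MatStable (Matrix.diagonal fun i => A i i) := by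
  intro i j
  by_cases h : i = j
  · subst h; simpa using hA i i
  · simp [Matrix.diagonal_apply_ne _ h]; exact RFStable.zero
set_option maxHeartbeats 1600000 in
/-- **Internal stability of the NRF implementation (Theorem 2(a)).**
In the feedback loop with NRF implementation `u = Φ (u + δ_u) + Γ z`, the
signals `z` and `u` are given by stable closed-loop maps of `w, r, ν, δ_u`. -/
theorem nrf_implementation_internal_stability {m p : ℕ}
    (G : Matrix (Fin p) (Fin m) (RatFunc ℝ))
    (M : Matrix (Fin m) (Fin m) (RatFunc ℝ)) (N : Matrix (Fin p) (Fin m) (RatFunc ℝ))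
    (Mt : Matrix (Fin p) (Fin p) (RatFunc ℝ)) (Nt : Matrix (Fin p) (Fin m) (RatFunc ℝ))
    (X : Matrix (Fin m) (Fin p) (RatFunc ℝ)) (Y : Matrix (Fin m) (Fin m) (RatFunc ℝ))
    (Xt : Matrix (Fin m) (Fin p) (RatFunc ℝ)) (Yt : Matrix (Fin p) (Fin p) (RatFunc ℝ))
    (hMinv : IsUnit M) (hMtinv : IsUnit Mt)
    (hGr : G = N * M⁻¹) (hGl : G = Mt⁻¹ * Nt)
    (hBez : Matrix.fromBlocks Y X (-Nt) Mt * Matrix.fromBlocks M (-Xt) N Yt = 1)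
    (hsM : MatStable M) (hsN : MatStable N) (hsMt : MatStable Mt) (hsNt : MatStable Nt)
    (hsX : MatStable X) (hsY : MatStable Y) (hsXt : MatStable Xt) (hsYt : MatStable Yt)
    (Q : Matrix (Fin m) (Fin p) (RatFunc ℝ)) (hsQ : MatStable Q)
    (XQ : Matrix (Fin m) (Fin p) (RatFunc ℝ)) (hXQ : XQ = X + Q * Mt)
    (YQ : Matrix (Fin m) (Fin m) (RatFunc ℝ)) (hYQ : YQ = Y - Q * Nt)
    (XtQ : Matrix (Fin m) (Fin p) (RatFunc ℝ)) (hXtQ : XtQ = Xt + M * Q)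
    (YtQ : Matrix (Fin p) (Fin p) (RatFunc ℝ)) (hYtQ : YtQ = Yt - N * Q)
    (Ydiag : Matrix (Fin m) (Fin m) (RatFunc ℝ))
    (hYdiag : Ydiag = Matrix.diagonal fun i => YQ i i)
    (hYdiagInv : IsUnit Ydiag)
    (Φ : Matrix (Fin m) (Fin m) (RatFunc ℝ)) (hΦ : Φ = 1 - Ydiag⁻¹ * YQ)
    (Γ : Matrix (Fin m) (Fin p) (RatFunc ℝ)) (hΓ : Γ = Ydiag⁻¹ * XQ)
    (z y r ν : Fin p → RatFunc ℝ) (u v w δu : Fin m → RatFunc ℝ)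
    (hz : z = r - y) (hv : v = u + w)
    (hy : y = G.mulVec v + ν)
    (hu : u = Φ.mulVec (u + δu) + Γ.mulVec z) :
    z = -((YtQ * Nt).mulVec w) + (YtQ * Mt).mulVec r - (YtQ * Mt).mulVec ν
        + (N * (YQ - Ydiag)).mulVec δu ∧
    u = -((XtQ * Nt).mulVec w) + (XtQ * Mt).mulVec r - (XtQ * Mt).mulVec ν
        - (M * (YQ - Ydiag)).mulVec δu ∧
    MatStable (YtQ * Nt) ∧ MatStable (YtQ * Mt) ∧ MatStable (N * (YQ - Ydiag)) ∧
    MatStable (XtQ * Nt) ∧ MatStable (XtQ * Mt) ∧ MatStable (M * (YQ - Ydiag)) ∧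
    MatStable ((1 : Matrix (Fin m) (Fin m) (RatFunc ℝ)) - XtQ * Nt) ∧
    MatStable ((1 : Matrix (Fin p) (Fin p) (RatFunc ℝ)) - YtQ * Mt) := by
  have hdetMt : IsUnit Mt.det := (Matrix.isUnit_iff_isUnit_det Mt).mp hMtinv
  have hdetD : IsUnit Ydiag.det := (Matrix.isUnit_iff_isUnit_det Ydiag).mp hYdiagInv
  -- Q-modified Bezout identity
  have hA : Matrix.fromBlocks YQ XQ (-Nt) Mt =
      Matrix.fromBlocks (1 : Matrix (Fin m) (Fin m) (RatFunc ℝ)) Q 0 1 *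
        Matrix.fromBlocks Y X (-Nt) Mt := by
    rw [Matrix.fromBlocks_multiply]
    simp only [Matrix.one_mul, Matrix.mul_neg, Matrix.zero_mul, zero_add]
    have c11 : Y - Q * Nt = Y + -(Q * Nt) := sub_eq_add_neg _ _
    rw [hYQ, hXQ, c11]
  have hB : Matrix.fromBlocks M (-XtQ) N YtQ =
      Matrix.fromBlocks M (-Xt) N Yt *
        Matrix.fromBlocks (1 : Matrix (Fin m) (Fin m) (RatFunc ℝ)) (-Q) 0 1 := by
    rw [Matrix.fromBlocks_multiply]
    simp only [Matrix.mul_one, Matrix.mul_zero, add_zero, Matrix.mul_neg, Matrix.neg_mul]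
    have c12 : -(Xt + M * Q) = -(M * Q) + -Xt := by abel
    have c22 : Yt - N * Q = -(N * Q) + Yt := by abel
    rw [hXtQ, hYtQ, c12, c22]
  have hQBez : Matrix.fromBlocks YQ XQ (-Nt) Mt * Matrix.fromBlocks M (-XtQ) N YtQ = 1 := by
    rw [hA, hB, Matrix.mul_assoc, ← Matrix.mul_assoc (Matrix.fromBlocks Y X (-Nt) Mt), hBez,
      Matrix.one_mul, Matrix.fromBlocks_multiply]
    simp only [Matrix.one_mul, Matrix.mul_one, Matrix.mul_zero, Matrix.zero_mul, add_zero,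
      zero_add, neg_add_cancel, Matrix.fromBlocks_one]
  have hQBez' : Matrix.fromBlocks M (-XtQ) N YtQ * Matrix.fromBlocks YQ XQ (-Nt) Mt = 1 :=
    mul_eq_one_comm.mp hQBez
  rw [Matrix.fromBlocks_multiply, show (1 : Matrix (Fin m ⊕ Fin p) (Fin m ⊕ Fin p) (RatFunc ℝ)) =
    Matrix.fromBlocks 1 0 0 1 from Matrix.fromBlocks_one.symm] at hQBez'
  have t11 := congrArg Matrix.toBlocks₁₁ hQBez'
  have t12 := congrArg Matrix.toBlocks₁₂ hQBez'
  have t21 := congrArg Matrix.toBlocks₂₁ hQBez'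
  have t22 := congrArg Matrix.toBlocks₂₂ hQBez'
  simp only [Matrix.toBlocks_fromBlocks₁₁, Matrix.toBlocks_fromBlocks₁₂,
    Matrix.toBlocks_fromBlocks₂₁, Matrix.toBlocks_fromBlocks₂₂, Matrix.neg_mul, Matrix.mul_neg,
    neg_neg] at t11 t12 t21 t22
  have e11 : M * YQ + XtQ * Nt = 1 := t11
  have e12 : M * XQ = XtQ * Mt := add_neg_eq_zero.mp t12
  have e21 : N * YQ = YtQ * Nt := add_neg_eq_zero.mp t21
  have e22 : N * XQ + YtQ * Mt = 1 := t22
  have hMYQ : M * YQ = 1 - XtQ * Nt := eq_sub_of_add_eq e11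
  have hNXQ : N * XQ = 1 - YtQ * Mt := eq_sub_of_add_eq e22
  -- Mt * G = Nt
  have hMtG : Mt * G = Nt := by
    rw [hGl, ← Matrix.mul_assoc, Matrix.mul_nonsing_inv _ hdetMt, Matrix.one_mul]
  -- key signal identity 1
  have h1 : Mt.mulVec z = Mt.mulVec r - Mt.mulVec ν - Nt.mulVec u - Nt.mulVec w := by
    rw [hz, hy, hv]
    simp only [Matrix.mulVec_sub, Matrix.mulVec_add, Matrix.mulVec_mulVec, hMtG]
    abel
  -- key signal identity 2
  have h2 : YQ.mulVec u = XQ.mulVec z - YQ.mulVec δu + Ydiag.mulVec δu := by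
    have hDΦ : Ydiag * Φ = Ydiag - YQ := by
      rw [hΦ, Matrix.mul_sub, Matrix.mul_one, ← Matrix.mul_assoc,
        Matrix.mul_nonsing_inv _ hdetD, Matrix.one_mul]
    have hDΓ : Ydiag * Γ = XQ := by
      rw [hΓ, ← Matrix.mul_assoc, Matrix.mul_nonsing_inv _ hdetD, Matrix.one_mul]
    have hD := congrArg Ydiag.mulVec hu
    simp only [Matrix.mulVec_add, Matrix.mulVec_mulVec, hDΦ, hDΓ, Matrix.sub_mulVec] at hD
    funext i
    have k := congrFun hD i
    simp only [Pi.add_apply, Pi.sub_apply] at k ⊢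
    linear_combination k
  have E1 : (YtQ * Nt).mulVec u = z - (YtQ * Mt).mulVec z - (YtQ * Nt).mulVec δu
      + (N * Ydiag).mulVec δu := by
    have k := congrArg N.mulVec h2
    simp only [Matrix.mulVec_add, Matrix.mulVec_sub, Matrix.mulVec_mulVec, e21, hNXQ,
      Matrix.sub_mulVec, Matrix.one_mulVec] at k
    funext i
    have k' := congrFun k i
    simp only [Pi.add_apply, Pi.sub_apply] at k' ⊢
    linear_combination k'
  have E2 : (YtQ * Nt).mulVec u = (YtQ * Mt).mulVec r - (YtQ * Mt).mulVec ν
      - (YtQ * Nt).mulVec w - (YtQ * Mt).mulVec z := by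
    have k := congrArg YtQ.mulVec h1
    simp only [Matrix.mulVec_sub, Matrix.mulVec_mulVec] at k
    funext i
    have k' := congrFun k i
    simp only [Pi.sub_apply] at k' ⊢
    linear_combination k'
  have hdN : (N * (YQ - Ydiag)).mulVec δu = (YtQ * Nt).mulVec δu - (N * Ydiag).mulVec δu := by
    rw [Matrix.mul_sub, Matrix.sub_mulVec, e21]
  have hzfin : z = -((YtQ * Nt).mulVec w) + (YtQ * Mt).mulVec r - (YtQ * Mt).mulVec ν
      + (N * (YQ - Ydiag)).mulVec δu := by
    funext i
    have k1 := congrFun E1 i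
    have k2 := congrFun E2 i
    have kd := congrFun hdN i
    simp only [Pi.add_apply, Pi.sub_apply, Pi.neg_apply] at k1 k2 kd ⊢
    linear_combination k2 - k1 - kd
  have F1 : u = (XtQ * Nt).mulVec u + (XtQ * Mt).mulVec z
      - (δu - (XtQ * Nt).mulVec δu) + (M * Ydiag).mulVec δu := by
    have k := congrArg M.mulVec h2
    simp only [Matrix.mulVec_add, Matrix.mulVec_sub, Matrix.mulVec_mulVec, hMYQ, e12,
      Matrix.sub_mulVec, Matrix.one_mulVec] at k
    funext i
    have k' := congrFun k i
    simp only [Pi.add_apply, Pi.sub_apply] at k' ⊢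
    linear_combination k'
  have F2 : (XtQ * Nt).mulVec u = (XtQ * Mt).mulVec r - (XtQ * Mt).mulVec ν
      - (XtQ * Nt).mulVec w - (XtQ * Mt).mulVec z := by
    have k := congrArg XtQ.mulVec h1
    simp only [Matrix.mulVec_sub, Matrix.mulVec_mulVec] at k
    funext i
    have k' := congrFun k i
    simp only [Pi.sub_apply] at k' ⊢
    linear_combination k'
  have hdM : (M * (YQ - Ydiag)).mulVec δu = δu - (XtQ * Nt).mulVec δu
      - (M * Ydiag).mulVec δu := by
    rw [Matrix.mul_sub, Matrix.sub_mulVec, hMYQ, Matrix.sub_mulVec, Matrix.one_mulVec]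
  have hufin : u = -((XtQ * Nt).mulVec w) + (XtQ * Mt).mulVec r - (XtQ * Mt).mulVec ν
      - (M * (YQ - Ydiag)).mulVec δu := by
    funext i
    have k1 := congrFun F1 i
    have k2 := congrFun F2 i
    have kd := congrFun hdM i
    simp only [Pi.add_apply, Pi.sub_apply, Pi.neg_apply] at k1 k2 kd ⊢
    linear_combination k1 + k2 + kd
  -- stability
  have hsYQ : MatStable YQ := by rw [hYQ]; exact hsY.sub (hsQ.mul hsNt)
  have hsXQ : MatStable XQ := by rw [hXQ]; exact hsX.add (hsQ.mul hsMt)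
  have hsYtQ : MatStable YtQ := by rw [hYtQ]; exact hsYt.sub (hsN.mul hsQ)
  have hsXtQ : MatStable XtQ := by rw [hXtQ]; exact hsXt.add (hsM.mul hsQ)
  have hsD : MatStable Ydiag := by rw [hYdiag]; exact hsYQ.diagonal
  refine ⟨hzfin, hufin, hsYtQ.mul hsNt, hsYtQ.mul hsMt, hsN.mul (hsYQ.sub hsD),
    hsXtQ.mul hsNt, hsXtQ.mul hsMt, hsM.mul (hsYQ.sub hsD), ?_, ?_⟩
  · rw [← hMYQ]; exact hsM.mul hsYQ
  · rw [← hNXQ]; exact hsN.mul hsXQ
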